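/- With sampling probabilities satisfying η p_j ≥ ‖a_j‖²/‖A‖_F² (η ≥ 1), define for a random index j the matrix W_j = B⁻¹(-p_j⁻¹ a_j a_j^T + A^T A). Then E[W_j^T W_j] = B⁻²(Σᵢ (‖aᵢ‖²/pᵢ) aᵢaᵢ^T - (A^T A)²) and ‖E[W_j^T W_j]‖ ≤ η ‖A‖_F² ‖A‖² / B². -/

import Mathlib

open Matrix
open scoped Matrix.Norms.L2Operator

section Aux

variable {d : ℕ}

private lemma conjT_eq_transpose {m k : ℕ} (M : Matrix (Fin m) (Fin k) ℝ) : Mᴴ = Mᵀ := by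
  ext i j; simp [conjTranspose_apply]

private lemma vmv_transpose (u : Fin d → ℝ) : (vecMulVec u u)ᵀ = vecMulVec u u := by
  ext i j; simp [vecMulVec_apply, transpose_apply, mul_comm]

private lemma vmv_mul_vmv (u : Fin d → ℝ) :
    vecMulVec u u * vecMulVec u u = (∑ i, u i ^ 2) • vecMulVec u u := by
  ext i j
  simp only [mul_apply, vecMulVec_apply, Matrix.smul_apply, smul_eq_mul, Finset.sum_mul]
  exact Finset.sum_congr rfl fun k _ => by ring

private lemma vmv_posSemidef (u : Fin d → ℝ) : (vecMulVec u u).PosSemidef := by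
  rw [posSemidef_iff_dotProduct_mulVec]
  constructor
  · ext i j; simp [conjTranspose_apply, vecMulVec_apply, mul_comm]
  · intro x
    have hx : star x = x := by ext i; simp
    have : x ⬝ᵥ (vecMulVec u u *ᵥ x) = (∑ i, u i * x i) ^ 2 := by
      rw [sq, Finset.sum_mul_sum]
      simp only [dotProduct, mulVec, vecMulVec_apply, Finset.mul_sum]
      exact Finset.sum_congr rfl fun i _ => Finset.sum_congr rfl fun k _ => by ring
    rw [hx, this]
    exact sq_nonneg _

private lemma smul_posSemidef {c : ℝ} (hc : 0 ≤ c) {M : Matrix (Fin d) (Fin d) ℝ}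
    (hM : M.PosSemidef) : (c • M).PosSemidef := by
  rw [posSemidef_iff_dotProduct_mulVec] at hM ⊢
  constructor
  · rw [IsHermitian, conjTranspose_smul, hM.1]; simp
  · intro x
    rw [smul_mulVec, dotProduct_smul, smul_eq_mul]
    exact mul_nonneg hc (hM.2 x)

private lemma sum_posSemidef {ι : Type*} (s : Finset ι) (f : ι → Matrix (Fin d) (Fin d) ℝ)
    (h : ∀ i ∈ s, (f i).PosSemidef) : (∑ i ∈ s, f i).PosSemidef :=
  Finset.sum_induction f _ (fun _ _ ha hb => ha.add hb) Matrix.PosSemidef.zero h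

open scoped MatrixOrder in
private lemma norm_mono {P Q : Matrix (Fin d) (Fin d) ℝ} (hP : P.PosSemidef)
    (hQP : (Q - P).PosSemidef) : ‖P‖ ≤ ‖Q‖ := by
  classical
  have key : ∀ x : EuclideanSpace ℝ (Fin d), x ⬝ᵥ (P *ᵥ x) ≤ ‖Q‖ * ‖x‖ ^ 2 := by
    intro x
    have h1 : 0 ≤ x ⬝ᵥ ((Q - P) *ᵥ x) := by
      have := hQP.dotProduct_mulVec_nonneg ((WithLp.equiv 2 (Fin d → ℝ)) x)
      simpa using this
    have h2 : x ⬝ᵥ ((Q - P) *ᵥ x) = x ⬝ᵥ (Q *ᵥ x) - x ⬝ᵥ (P *ᵥ x) := by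
      rw [sub_mulVec, dotProduct_sub]
    have h3 : x ⬝ᵥ (Q *ᵥ x) ≤ ‖Q‖ * ‖x‖ ^ 2 := by
      have hinner : x ⬝ᵥ (Q *ᵥ x)
          = inner (𝕜 := ℝ) x ((EuclideanSpace.equiv (Fin d) ℝ).symm (Q *ᵥ x)) := by
        simp [PiLp.inner_apply, dotProduct, EuclideanSpace.equiv, mul_comm]
      calc x ⬝ᵥ (Q *ᵥ x)
          = inner (𝕜 := ℝ) x ((EuclideanSpace.equiv (Fin d) ℝ).symm (Q *ᵥ x)) := hinner
        _ ≤ ‖x‖ * ‖(EuclideanSpace.equiv (Fin d) ℝ).symm (Q *ᵥ x)‖ := real_inner_le_norm _ _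
        _ ≤ ‖x‖ * (‖Q‖ * ‖x‖) := by
            have := Q.l2_opNorm_mulVec x
            exact mul_le_mul_of_nonneg_left this (norm_nonneg x)
        _ = ‖Q‖ * ‖x‖ ^ 2 := by ring
    linarith
  set R := CFC.sqrt P with hRdef
  have hRR : R * R = P := CFC.sqrt_mul_sqrt_self P hP.nonneg
  have hRH : Rᴴ = R := (CFC.sqrt_nonneg P).posSemidef.1
  have hRT : Rᵀ = R := by rw [← conjT_eq_transpose, hRH]
  have hnorm : ∀ x : EuclideanSpace ℝ (Fin d),
      ‖(EuclideanSpace.equiv (Fin d) ℝ).symm (R *ᵥ x)‖ ≤ Real.sqrt ‖Q‖ * ‖x‖ := by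
    intro x
    have e1 : ‖(EuclideanSpace.equiv (Fin d) ℝ).symm (R *ᵥ x)‖ ^ 2 = x ⬝ᵥ (P *ᵥ x) := by
      rw [← real_inner_self_eq_norm_sq]
      have hi : inner (𝕜 := ℝ) ((EuclideanSpace.equiv (Fin d) ℝ).symm (R *ᵥ x))
          ((EuclideanSpace.equiv (Fin d) ℝ).symm (R *ᵥ x)) = (R *ᵥ x) ⬝ᵥ (R *ᵥ x) := by
        rw [PiLp.inner_apply]; simp [dotProduct, EuclideanSpace.equiv, sq]
      rw [hi, dotProduct_mulVec, ← mulVec_transpose, hRT, mulVec_mulVec, hRR,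
        dotProduct_comm]
    have e2 : ‖(EuclideanSpace.equiv (Fin d) ℝ).symm (R *ᵥ x)‖ ^ 2
        ≤ (Real.sqrt ‖Q‖ * ‖x‖) ^ 2 := by
      rw [e1, mul_pow, Real.sq_sqrt (norm_nonneg Q)]
      exact key x
    have hb : 0 ≤ Real.sqrt ‖Q‖ * ‖x‖ := mul_nonneg (Real.sqrt_nonneg _) (norm_nonneg _)
    nlinarith [norm_nonneg ((EuclideanSpace.equiv (Fin d) ℝ).symm (R *ᵥ x))]
  have hRnorm : ‖R‖ ≤ Real.sqrt ‖Q‖ := by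
    rw [Matrix.l2_opNorm_def]
    exact ContinuousLinearMap.opNorm_le_bound _ (Real.sqrt_nonneg _) fun x => hnorm x
  calc ‖P‖ = ‖Rᴴ * R‖ := by rw [hRH, hRR]
    _ = ‖R‖ * ‖R‖ := Matrix.l2_opNorm_conjTranspose_mul_self R
    _ ≤ Real.sqrt ‖Q‖ * Real.sqrt ‖Q‖ :=
        mul_le_mul hRnorm hRnorm (norm_nonneg _) (Real.sqrt_nonneg _)
    _ = ‖Q‖ := Real.mul_self_sqrt (norm_nonneg _)

private lemma expand_sq (c q : ℝ) (M S : Matrix (Fin d) (Fin d) ℝ) (hM2 : M * M = q • M) :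
    (-(c • M) + S) * (-(c • M) + S)
      = (c ^ 2 * q) • M - c • (M * S) - c • (S * M) + S * S := by
  simp only [add_mul, mul_add, neg_mul, mul_neg, neg_neg, smul_mul_assoc, mul_smul_comm,
    hM2, smul_smul]
  match_scalars <;> ring

end Aux
theorem minibatch_variance_term_bound
    (n d : ℕ) (A : Matrix (Fin n) (Fin d) ℝ) (p : Fin n → ℝ) (η B : ℝ)
    (hp0 : ∀ j, 0 ≤ p j) (hp1 : ∑ j, p j = 1) (hη : 1 ≤ η) (hB : 0 < B)
    (hprob : ∀ j, η * p j ≥ (∑ i, (A j i) ^ 2) / (∑ j', ∑ i, (A j' i) ^ 2))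
    (W : Fin n → Matrix (Fin d) (Fin d) ℝ)
    (hW : ∀ j, W j = B⁻¹ •
      (-((p j)⁻¹ • Matrix.vecMulVec (fun i => A j i) (fun i => A j i)) + Aᵀ * A)) :
    (∑ j, p j • ((W j)ᵀ * W j) =
      (B ^ 2)⁻¹ •
        ((∑ i, ((∑ i', (A i i') ^ 2) / p i) •
            Matrix.vecMulVec (fun i' => A i i') (fun i' => A i i'))
          - (Aᵀ * A) * (Aᵀ * A))) ∧
    ‖∑ j, p j • ((W j)ᵀ * W j)‖ ≤ η * (∑ j', ∑ i, (A j' i) ^ 2) * ‖A‖ ^ 2 / B ^ 2 := by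
  classical
  have hB' : B ≠ 0 := ne_of_gt hB
  set F : ℝ := ∑ j', ∑ i, (A j' i) ^ 2 with hF
  set S : Matrix (Fin d) (Fin d) ℝ := Aᵀ * A with hS
  have hF0 : 0 ≤ F := Finset.sum_nonneg fun j _ => Finset.sum_nonneg fun i _ => sq_nonneg _
  have hrow_nonneg : ∀ j, 0 ≤ ∑ i, (A j i) ^ 2 :=
    fun j => Finset.sum_nonneg fun i _ => sq_nonneg _
  have hrow_le : ∀ j, (∑ i, (A j i) ^ 2) ≤ F := fun j =>
    Finset.single_le_sum (fun j' _ => hrow_nonneg j') (Finset.mem_univ j)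
  have hkey : ∀ j, (∑ i, (A j i) ^ 2) ≤ η * p j * F := by
    intro j
    rcases eq_or_lt_of_le hF0 with h0 | h0
    · rw [← h0, mul_zero]
      have h1 := hrow_le j
      linarith
    · have h := hprob j
      rw [ge_iff_le, div_le_iff₀ h0] at h
      linarith
  have hrow0 : ∀ j, p j = 0 → (fun i => A j i) = (0 : Fin d → ℝ) := by
    intro j hpj
    have h1 : (∑ i, (A j i) ^ 2) ≤ 0 := by
      have := hkey j; rw [hpj] at this; simpa using this
    funext i
    have h2 := (Finset.sum_eq_zero_iff_of_nonneg (fun i _ => sq_nonneg (A j i))).mp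
      (le_antisymm h1 (hrow_nonneg j)) i (Finset.mem_univ i)
    exact pow_eq_zero_iff two_ne_zero |>.mp h2
  have hM0 : ∀ j, p j = 0 → vecMulVec (A j) (A j) = 0 := by
    intro j hpj
    have : A j = (0 : Fin d → ℝ) := hrow0 j hpj
    rw [this]; ext k l; simp [vecMulVec_apply]
  have hSt : Sᵀ = S := by rw [hS, transpose_mul, transpose_transpose]
  have hMsum : ∑ j, vecMulVec (A j) (A j) = S := by
    ext k l
    simp [hS, Matrix.sum_apply, vecMulVec_apply, mul_apply, transpose_apply, mul_comm]
  have hEj : ∀ j, p j • ((W j)ᵀ * W j) =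
      (B ^ 2)⁻¹ • (((∑ i, (A j i) ^ 2) / p j) • vecMulVec (A j) (A j)
        - S * vecMulVec (A j) (A j) - vecMulVec (A j) (A j) * S + p j • (S * S)) := by
    intro j
    by_cases hp : p j = 0
    · rw [hW j, hp, hM0 j hp]
      simp
    · rw [hW j]
      have ht : (-((p j)⁻¹ • vecMulVec (A j) (A j)) + S)ᵀ
          = -((p j)⁻¹ • vecMulVec (A j) (A j)) + S := by
        rw [transpose_add, transpose_neg, transpose_smul, vmv_transpose, hSt]
      rw [transpose_smul, ht, smul_mul_assoc, mul_smul_comm,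
        expand_sq _ _ _ _ (vmv_mul_vmv (A j))]
      match_scalars
      all_goals (field_simp; try ring)
      all_goals tauto
  have hsum : ∑ j, p j • ((W j)ᵀ * W j)
      = (B ^ 2)⁻¹ • ((∑ j, ((∑ i, (A j i) ^ 2) / p j) • vecMulVec (A j) (A j)) - S * S) := by
    rw [Finset.sum_congr rfl fun j _ => hEj j, ← Finset.smul_sum]
    congr 1
    rw [show ∀ f g h k : Fin n → Matrix (Fin d) (Fin d) ℝ,
        ∑ j, (f j - g j - h j + k j) = ∑ j, f j - ∑ j, g j - ∑ j, h j + ∑ j, k j from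
      fun f g h k => by
        simp only [Finset.sum_add_distrib, Finset.sum_sub_distrib]]
    rw [← Finset.mul_sum, ← Finset.sum_mul, ← Finset.sum_smul, hMsum, hp1, one_smul]
    abel
  constructor
  · exact hsum
  · -- norm bound
    set T : Matrix (Fin d) (Fin d) ℝ :=
      ∑ j, ((∑ i, (A j i) ^ 2) / p j) • vecMulVec (A j) (A j) with hT
    have hT_psd : T.PosSemidef := by
      apply sum_posSemidef
      intro j _
      exact smul_posSemidef (div_nonneg (hrow_nonneg j) (hp0 j)) (vmv_posSemidef (A j))
    have hSh : Sᴴ = S := by rw [conjT_eq_transpose, hSt]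
    have hSS_psd : (S * S).PosSemidef := by
      have := Matrix.posSemidef_conjTranspose_mul_self S
      rwa [hSh] at this
    have hE_psd : (∑ j, p j • ((W j)ᵀ * W j)).PosSemidef := by
      apply sum_posSemidef
      intro j _
      apply smul_posSemidef (hp0 j)
      have := Matrix.posSemidef_conjTranspose_mul_self (W j)
      rwa [conjT_eq_transpose] at this
    have hB2 : (0:ℝ) ≤ (B ^ 2)⁻¹ := inv_nonneg.mpr (sq_nonneg B)
    have h1 : ‖∑ j, p j • ((W j)ᵀ * W j)‖ ≤ ‖(B ^ 2)⁻¹ • T‖ := by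
      apply norm_mono hE_psd
      have hdiff : (B ^ 2)⁻¹ • T - ∑ j, p j • ((W j)ᵀ * W j) = (B ^ 2)⁻¹ • (S * S) := by
        rw [hsum, ← smul_sub]
        congr 1
        abel
      rw [hdiff]
      exact smul_posSemidef hB2 hSS_psd
    have hηF : 0 ≤ η * F := mul_nonneg (by linarith) hF0
    have h3 : ((η * F) • S - T).PosSemidef := by
      have hrepr : (η * F) • S - T
          = ∑ j, (η * F - (∑ i, (A j i) ^ 2) / p j) • vecMulVec (A j) (A j) := by
        simp only [sub_smul, Finset.sum_sub_distrib, ← Finset.smul_sum, hMsum, hT]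
      rw [hrepr]
      apply sum_posSemidef
      intro j _
      apply smul_posSemidef _ (vmv_posSemidef (A j))
      by_cases hp : p j = 0
      · rw [hp]; simpa using hηF
      · have hppos : 0 < p j := lt_of_le_of_ne (hp0 j) (Ne.symm hp)
        have : (∑ i, (A j i) ^ 2) / p j ≤ η * F := by
          rw [div_le_iff₀ hppos]
          have := hkey j
          nlinarith
        linarith
    have h4 : ‖T‖ ≤ ‖(η * F) • S‖ := norm_mono hT_psd h3
    have h5 : ‖(η * F) • S‖ = (η * F) * ‖S‖ := by
      rw [norm_smul, Real.norm_eq_abs, abs_of_nonneg hηF]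
    have h6 : ‖S‖ = ‖A‖ ^ 2 := by
      have := Matrix.l2_opNorm_conjTranspose_mul_self A
      rw [conjT_eq_transpose] at this
      rw [hS, this, sq]
    have h2 : ‖(B ^ 2)⁻¹ • T‖ = (B ^ 2)⁻¹ * ‖T‖ := by
      rw [norm_smul, Real.norm_eq_abs, abs_of_nonneg hB2]
    calc ‖∑ j, p j • ((W j)ᵀ * W j)‖ ≤ ‖(B ^ 2)⁻¹ • T‖ := h1
      _ = (B ^ 2)⁻¹ * ‖T‖ := h2
      _ ≤ (B ^ 2)⁻¹ * ((η * F) * ‖S‖) := by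
          apply mul_le_mul_of_nonneg_left _ hB2
          rw [← h5]; exact h4
      _ = η * F * ‖A‖ ^ 2 / B ^ 2 := by rw [h6]; field_simp
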